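/- Let c ∈ ℂ and R > 0, and let f : ℂ → ℂ be differentiable on the open ball of center c and radius R and continuous on the closed ball of center c and radius R. Then for every z in the open ball of center c and radius R, (2πi)⁻¹ · ∮_{|σ−c|=R} conj(f(σ))/(σ − z) dσ = conj(f(c)), where the integral is the circle integral over the circle of center c and radius R. -/

import Mathlib

open Complex Metric
open scoped Real

lemma conj_intervalIntegral (f : ℝ → ℂ) (a b : ℝ) :
    (starRingEnd ℂ) (∫ x in a..b, f x) = ∫ x in a..b, (starRingEnd ℂ) (f x) := by
  rw [intervalIntegral, intervalIntegral, map_sub, ← integral_conj, ← integral_conj]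

theorem cauchy_transform_of_conj_eq_conj_center
    (c : ℂ) (R : ℝ) (hR : 0 < R) (f : ℂ → ℂ)
    (hf : DifferentiableOn ℂ f (Metric.ball c R))
    (hfc : ContinuousOn f (Metric.closedBall c R)) :
    ∀ z ∈ Metric.ball c R,
      (2 * (π : ℂ) * I)⁻¹ * (∮ σ in C(c, R), (starRingEnd ℂ) (f σ) / (σ - z)) =
        (starRingEnd ℂ) (f c) := by
  intro z hz
  set a : ℂ := (starRingEnd ℂ) (c - z) with ha
  have hza : ‖c - z‖ < R := by
    have h := mem_ball.mp hz
    rw [Complex.dist_eq] at h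
    rwa [norm_sub_rev]
  -- the denominator never vanishes on the closed ball
  have key : ∀ σ ∈ closedBall c R, (R : ℂ)^2 + a * (σ - c) ≠ 0 := by
    intro σ hσ
    have h1 : ‖a * (σ - c)‖ < ‖(R : ℂ)^2‖ := by
      rw [norm_mul, norm_pow, Complex.norm_real, Real.norm_eq_abs, _root_.abs_of_pos hR]
      have hσ' : ‖σ - c‖ ≤ R := by
        simpa [Complex.dist_eq] using (mem_closedBall.mp hσ)
      have haa : ‖a‖ = ‖c - z‖ := by
        rw [ha, Complex.norm_conj]
      calc ‖a‖ * ‖σ - c‖ ≤ ‖c - z‖ * R := by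
            exact mul_le_mul (le_of_eq haa) hσ' (norm_nonneg _) (norm_nonneg _)
        _ < R * R := by nlinarith [norm_nonneg (c - z)]
        _ = R ^ 2 := by ring
    intro h
    rw [add_eq_zero_iff_eq_neg] at h
    rw [h] at h1
    simp at h1
  set F : ℂ → ℂ := fun σ => -(R : ℂ)^2 * f σ / ((R : ℂ)^2 + a * (σ - c)) with hF
  have hFd : DiffContOnCl ℂ F (ball c R) := by
    constructor
    · exact ((differentiableOn_const _).mul hf).div
        ((differentiableOn_const _).add ((differentiableOn_const _).mul
          (differentiableOn_id.sub (differentiableOn_const _))))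
        (fun σ hσ => key σ (ball_subset_closedBall hσ))
    · rw [closure_ball c hR.ne']
      exact (continuousOn_const.mul hfc).div
        (continuousOn_const.add (continuousOn_const.mul
          (continuousOn_id.sub continuousOn_const)))
        key
  have hC := hFd.circleIntegral_sub_inv_smul (mem_ball_self hR)
  have hFc : F c = -f c := by
    have : (R:ℂ)^2 ≠ 0 := by
      simpa using pow_ne_zero 2 (ofReal_ne_zero.mpr hR.ne')
    simp only [hF, sub_self, mul_zero, add_zero]
    rw [neg_mul, neg_div, mul_div_right_comm, div_self this, one_mul]
  -- conjugate of the LHS integral equals the Cauchy integral of F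
  have hconj : (starRingEnd ℂ) (∮ σ in C(c, R), (starRingEnd ℂ) (f σ) / (σ - z)) =
      ∮ σ in C(c, R), (σ - c)⁻¹ • F σ := by
    rw [circleIntegral, circleIntegral, conj_intervalIntegral]
    apply intervalIntegral.integral_congr
    intro θ _
    set e : ℂ := Complex.exp (θ * I) with he
    have hene : e ≠ 0 := Complex.exp_ne_zero _
    have hce : (starRingEnd ℂ) e = e⁻¹ := by
      rw [he, ← Complex.exp_conj, ← Complex.exp_neg]
      congr 1
      simp [map_mul, conj_I]
    have hσ : circleMap c R θ = c + R * e := rfl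
    have hdc : deriv (circleMap c R) θ = R * e * I := by
      rw [deriv_circleMap]; simp [circleMap, he]
    clear_value e
    have hsz : circleMap c R θ - z ≠ 0 := sub_ne_zero.mpr (circleMap_ne_mem_ball hz θ)
    have hden : (R : ℂ)^2 + a * (R * e) ≠ 0 := by
      have := key (circleMap c R θ) (circleMap_mem_closedBall c hR.le θ)
      rwa [hσ, add_sub_cancel_left] at this
    have hcsz : (starRingEnd ℂ) (circleMap c R θ - z) ≠ 0 := by
      intro h
      exact hsz (by simpa using congrArg (starRingEnd ℂ) h)
    have hRne : (R : ℂ) ≠ 0 := ofReal_ne_zero.mpr hR.ne'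
    have ha' : a = (starRingEnd ℂ) c - (starRingEnd ℂ) z := by rw [ha, map_sub]
    have hee : e * (starRingEnd ℂ) e = 1 := by rw [hce, mul_inv_cancel₀ hene]
    have hcene : (starRingEnd ℂ) e ≠ 0 := by rw [hce]; exact inv_ne_zero hene
    have hcsz' : (starRingEnd ℂ) c + (R : ℂ) * (starRingEnd ℂ) e - (starRingEnd ℂ) z ≠ 0 := by
      have h2 := hcsz
      rw [hσ] at h2
      simpa [map_sub, map_add, map_mul, conj_ofReal] using h2
    have hden' : (R : ℂ)^2 + ((starRingEnd ℂ) c - (starRingEnd ℂ) z) * (R * e) ≠ 0 := by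
      rwa [ha'] at hden
    simp only [smul_eq_mul, map_mul, map_div₀, map_sub, map_add, conj_conj, conj_ofReal,
      conj_I, hdc, hσ, hF]
    rw [ha', add_sub_cancel_left]
    rw [hce]
    field_simp
    ring
  have hL : (∮ σ in C(c, R), (starRingEnd ℂ) (f σ) / (σ - z)) =
      2 * (π : ℂ) * I * (starRingEnd ℂ) (f c) := by
    have := congrArg (starRingEnd ℂ) hconj
    rw [conj_conj, hC, hFc] at this
    rw [this]
    simp only [smul_eq_mul, map_mul, map_neg, conj_I, conj_ofReal, map_ofNat]
    ring
  rw [hL]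
  have h2 : (2 * (π : ℂ) * I) ≠ 0 := by
    simp [Real.pi_ne_zero, I_ne_zero]
  field_simp
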